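/- Let m ≥ 1 and fix an integer t with 0 ≤ t < 2^m. Then the set of pairs (i, j) with 0 ≤ i < 2^{m-1}, 0 ≤ j ≤ 9, and t ≡ 10 i + j (mod 2^m) consists of exactly five pairs, and the digits j occurring are exactly the five digits of the same parity as t (each with a unique corresponding i). -/

import Mathlib

theorem five_pairs (m : ℕ) (hm : 1 ≤ m) (t : ℕ) (ht : t < 2 ^ m) :
    ((Finset.range (2 ^ (m - 1)) ×ˢ Finset.range 10).filter
        (fun p => t % 2 ^ m = (10 * p.1 + p.2) % 2 ^ m)).card = 5 ∧
    ((Finset.range (2 ^ (m - 1)) ×ˢ Finset.range 10).filter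
        (fun p => t % 2 ^ m = (10 * p.1 + p.2) % 2 ^ m)).image Prod.snd
      = (Finset.range 10).filter (fun j => j % 2 = t % 2) := by
  set N := 2 ^ (m - 1) with hN
  have hNpos : 0 < N := Nat.pow_pos (by norm_num)
  haveI : NeZero N := ⟨hNpos.ne'⟩
  have h2N : 2 ^ m = 2 * N := by
    rw [hN, ← pow_succ']
    congr 1
    omega
  have hcop : Nat.Coprime 5 N := Nat.Coprime.pow_right _ (by decide)
  have hu : IsUnit (5 : ZMod N) := by
    have h5c : ((5 : ℕ) : ZMod N) = (5 : ZMod N) := by push_cast; ring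
    rw [← h5c, ZMod.isUnit_iff_coprime]
    exact hcop
  set f : ℕ → ℕ := fun j => ((5 : ZMod N)⁻¹ * ((((t : ℤ) - j) / 2 : ℤ) : ZMod N)).val
    with hf
  have hflt : ∀ j, f j < N := fun j => ZMod.val_lt _
  have hfwd : ∀ j : ℕ, j % 2 = t % 2 → (10 * f j + j) % 2 ^ m = t % 2 ^ m := by
    intro j hj
    set c : ℤ := ((t : ℤ) - j) / 2 with hc
    have hdvd2 : (2 : ℤ) ∣ (t : ℤ) - j := by omega
    have h2c : 2 * c = (t : ℤ) - j := by rw [hc]; exact Int.mul_ediv_cancel' hdvd2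
    have hfz : ((f j : ℕ) : ZMod N) = (5 : ZMod N)⁻¹ * (c : ZMod N) := by
      rw [hf]
      simp [ZMod.natCast_val, ZMod.cast_id, hc]
    have h5 : (5 : ZMod N) * ((f j : ℕ) : ZMod N) = (c : ZMod N) := by
      rw [hfz, ← mul_assoc, ZMod.mul_inv_of_unit _ hu, one_mul]
    have hdN : (N : ℤ) ∣ 5 * (f j : ℤ) - c := by
      rw [← ZMod.intCast_zmod_eq_zero_iff_dvd]
      push_cast
      rw [← h5]
      push_cast
      ring
    have h10 : (10 * (f j : ℤ) + j) - t = 2 * (5 * (f j : ℤ) - c) := by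
      rw [mul_sub, h2c]; ring
    have hdd : (2 : ℤ) * N ∣ (10 * (f j : ℤ) + j) - t := by
      rw [h10]
      exact mul_dvd_mul_left 2 hdN
    have hmod : t ≡ 10 * f j + j [MOD 2 ^ m] := by
      rw [Nat.modEq_iff_dvd, h2N]
      push_cast
      push_cast at hdd
      convert hdd using 1
    exact hmod.symm
  have huniq : ∀ i i' j : ℕ, i < N → i' < N →
      (10 * i + j) % 2 ^ m = (10 * i' + j) % 2 ^ m → i = i' := by
    intro i i' j hi hi' heq
    have h1 : ((2 : ℤ) * N) ∣ (10 * (i' : ℤ) + j) - (10 * i + j) := by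
      have := Nat.modEq_iff_dvd.mp (heq : (10 * i + j) ≡ (10 * i' + j) [MOD 2 ^ m])
      rw [h2N] at this
      push_cast at this
      convert this using 1
    have h2 : (2 : ℤ) * N ∣ 2 * (5 * ((i' : ℤ) - i)) := by
      have he : (10 * (i' : ℤ) + j) - (10 * i + j) = 2 * (5 * ((i' : ℤ) - i)) := by ring
      rwa [he] at h1
    have h3 : (N : ℤ) ∣ 5 * ((i' : ℤ) - i) :=
      (mul_dvd_mul_iff_left (by norm_num : (2:ℤ) ≠ 0)).mp h2
    have hic : IsCoprime (N : ℤ) (5 : ℤ) := by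
      have : IsCoprime ((5 : ℕ) : ℤ) ((N : ℕ) : ℤ) := Int.isCoprime_iff_gcd_eq_one.mpr (by
        rw [Int.gcd_natCast_natCast]; exact hcop)
      exact (by exact_mod_cast this.symm)
    have h4 : (N : ℤ) ∣ (i' : ℤ) - i := hic.dvd_of_dvd_mul_left h3
    have h5 : i ≡ i' [MOD N] := Nat.modEq_iff_dvd.mpr h4
    rw [Nat.ModEq, Nat.mod_eq_of_lt hi, Nat.mod_eq_of_lt hi'] at h5
    exact h5
  have hpar : ∀ i j : ℕ, t % 2 ^ m = (10 * i + j) % 2 ^ m → j % 2 = t % 2 := by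
    intro i j heq
    have h2d : (2 : ℕ) ∣ 2 ^ m := dvd_pow_self 2 (by omega)
    have := Nat.mod_mod_of_dvd t h2d
    have h2 := Nat.mod_mod_of_dvd (10 * i + j) h2d
    rw [heq] at this
    rw [h2] at this
    omega
  have key : ((Finset.range N ×ˢ Finset.range 10).filter
        (fun p => t % 2 ^ m = (10 * p.1 + p.2) % 2 ^ m))
      = ((Finset.range 10).filter (fun j => j % 2 = t % 2)).image (fun j => (f j, j)) := by
    ext ⟨i, j⟩
    simp only [Finset.mem_filter, Finset.mem_image, Finset.mem_product, Finset.mem_range,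
      Prod.mk.injEq]
    constructor
    · rintro ⟨⟨hi, hj⟩, heq⟩
      have hp := hpar i j heq
      refine ⟨j, ⟨hj, hp⟩, ?_, rfl⟩
      exact huniq (f j) i j (hflt j) hi (by rw [hfwd j hp, ← heq])
    · rintro ⟨a, ⟨ha10, hap⟩, hfa, rfl⟩
      subst hfa
      exact ⟨⟨hflt a, ha10⟩, (hfwd a hap).symm⟩
  have hcard5 : ((Finset.range 10).filter (fun j => j % 2 = t % 2)).card = 5 := by
    rcases Nat.mod_two_eq_zero_or_one t with h | h <;> simp only [h] <;> decide
  constructor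
  · rw [key, Finset.card_image_of_injective _ (fun a b hab => congrArg Prod.snd hab),
      hcard5]
  · rw [key, Finset.image_image]
    have : (Prod.snd ∘ fun j => (f j, j)) = id := rfl
    rw [this, Finset.image_id]
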